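/- Let G : T → T′ be a triangulated (exact) functor between triangulated categories. Let C be the full subcategory of T′ consisting of the objects M for which the functor N ↦ Hom_{T′}(M, G(N)) from T to abelian groups is corepresentable, i.e., naturally isomorphic to Hom_T(F_M, −) for some object F_M of T. Then: (1) C is closed under cones: if f : M₁ → M₂ is a morphism of T′ with M₁, M₂ ∈ C and M₁ → M₂ → C(f) → M₁[1] is a distinguished triangle, then C(f) ∈ C; (2) if T and T′ admit small coproducts, then C is closed under small direct sums: for any set-indexed family {M_i}_{i∈I} of objects of C, the coproduct ⊕_{i∈I} M_i belongs to C. -/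

import Mathlib

/-!
Statement 11: for a triangulated functor `G : T ⥤ T′`, the full subcategory of objects `M`
of `T′` such that `N ↦ Hom(M, G N)` is corepresentable is closed under cones and under
small direct sums.
-/

open CategoryTheory CategoryTheory.Limits CategoryTheory.Pretriangulated

universe v u u'

namespace CorepClosedAux

open Opposite Category

section Shift

variable {T : Type u} {T' : Type u'} [Category.{v} T] [Category.{v} T']
    [HasShift T ℤ] [HasShift T' ℤ]
    (G : T ⥤ T') [G.CommShift ℤ]

lemma keylem (X : T) :
    (shiftFunctor T' (1:ℤ)).map
        (G.map ((shiftFunctorCompIsoId T (1:ℤ) (-1) (add_neg_cancel 1)).inv.app X)) ≫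
      (shiftFunctor T' (1:ℤ)).map ((G.commShiftIso (-1:ℤ)).hom.app (X⟦(1:ℤ)⟧)) ≫
      (shiftFunctorCompIsoId T' (-1:ℤ) (1:ℤ) (neg_add_cancel 1)).hom.app (G.obj (X⟦(1:ℤ)⟧)) =
    (G.commShiftIso (1:ℤ)).inv.app X := by
  simp only [Functor.map_shiftFunctorCompIsoId_inv_app, Functor.map_comp, assoc]
  rw [← Functor.map_comp_assoc (shiftFunctor T' (1:ℤ)) ((G.commShiftIso (-1:ℤ)).inv.app _)
    ((G.commShiftIso (-1:ℤ)).hom.app _), Iso.inv_hom_id_app, CategoryTheory.Functor.map_id,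
    id_comp]
  have h1 := (shiftFunctorCompIsoId T' (-1:ℤ) (1:ℤ) (neg_add_cancel 1)).hom.naturality
    ((G.commShiftIso (1:ℤ)).inv.app X)
  dsimp at h1
  rw [h1, ← assoc, shift_shiftFunctorCompIsoId_add_neg_cancel_inv_app, Iso.inv_hom_id_app]
  simp

variable {G} in
/-- Shifted corepresentability. -/
lemma shift_bijective {M : T'} {A : T}
    (e : (G ⋙ coyoneda.obj (op M)).CorepresentableBy A) (N : T) :
    Function.Bijective (fun (h : A⟦(1:ℤ)⟧ ⟶ N) =>
      (e.homEquiv (𝟙 A))⟦(1:ℤ)⟧' ≫ (G.commShiftIso (1:ℤ)).inv.app A ≫ G.map h) := by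
  have heq : (fun (h : A⟦(1:ℤ)⟧ ⟶ N) =>
      (e.homEquiv (𝟙 A))⟦(1:ℤ)⟧' ≫ (G.commShiftIso (1:ℤ)).inv.app A ≫ G.map h) =
      ⇑((shiftEquiv T' (1:ℤ)).toAdjunction.homEquiv M (G.obj N)).symm ∘
      ⇑(Iso.homCongr (Iso.refl M) ((G.commShiftIso (-1:ℤ)).app N)) ∘
      ⇑(e.homEquiv (Y := N⟦(-1:ℤ)⟧)) ∘
      ⇑((shiftEquiv T (1:ℤ)).toAdjunction.homEquiv A N) := by
    funext h
    delta shiftEquiv shiftEquiv'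
    dsimp only [Function.comp]
    rw [Iso.homCongr_apply, Adjunction.homEquiv_counit, Adjunction.homEquiv_unit]
    conv_rhs => rw [e.homEquiv_eq]
    dsimp only [Equivalence.toAdjunction, Functor.comp_obj, Functor.comp_map,
      Functor.flip_obj_map, yoneda_map_app, TypeCat.ofHom_apply, Iso.refl_inv, Iso.app_hom,
      Equivalence.symm_functor, Equivalence.symm_inverse]
    rw [id_comp]
    dsimp only [shiftEquiv, shiftEquiv', Equivalence.unit, Equivalence.counit, Iso.symm_hom]
    simp only [Functor.map_comp, assoc]
    have h2 := (G.commShiftIso (-1:ℤ)).hom.naturality h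
    dsimp at h2
    rw [← Functor.map_comp_assoc (shiftFunctor T' (1:ℤ))
      (G.map ((shiftFunctor T (-1:ℤ)).map h)) ((G.commShiftIso (-1:ℤ)).hom.app N), h2,
      Functor.map_comp, assoc]
    have h3 := (shiftFunctorCompIsoId T' (-1:ℤ) (1:ℤ) (neg_add_cancel 1)).hom.naturality
      (G.map h)
    dsimp at h3
    rw [h3]
    rw [reassoc_of% (keylem G A)]
  rw [heq]
  exact (((shiftEquiv T' (1:ℤ)).toAdjunction.homEquiv M (G.obj N)).symm.bijective.comp
    ((Iso.homCongr (Iso.refl M) ((G.commShiftIso (-1:ℤ)).app N)).bijective.comp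
      ((e.homEquiv (Y := N⟦(-1:ℤ)⟧)).bijective.comp
        ((shiftEquiv T (1:ℤ)).toAdjunction.homEquiv A N).bijective)))

end Shift

section Cone

variable {T : Type u} {T' : Type u'} [Category.{v} T] [Category.{v} T']
    [HasZeroObject T] [HasZeroObject T'] [Preadditive T] [Preadditive T']
    [HasShift T ℤ] [HasShift T' ℤ]
    [∀ n : ℤ, (CategoryTheory.shiftFunctor T n).Additive]
    [∀ n : ℤ, (CategoryTheory.shiftFunctor T' n).Additive]
    [Pretriangulated T] [Pretriangulated T']
    (G : T ⥤ T') [G.CommShift ℤ] [G.IsTriangulated]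

lemma cone_corep (Tri : Triangle T') (hTri : Tri ∈ distTriang T')
    (h₁ : (G ⋙ coyoneda.obj (Opposite.op Tri.obj₁)).IsCorepresentable)
    (h₂ : (G ⋙ coyoneda.obj (Opposite.op Tri.obj₂)).IsCorepresentable) :
    (G ⋙ coyoneda.obj (Opposite.op Tri.obj₃)).IsCorepresentable := by
  obtain ⟨A, ⟨e₁⟩⟩ := h₁.has_corepresentation
  obtain ⟨B, ⟨e₂⟩⟩ := h₂.has_corepresentation
  set u₁ : Tri.obj₁ ⟶ G.obj A := e₁.homEquiv (𝟙 A) with hu₁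
  set u₂ : Tri.obj₂ ⟶ G.obj B := e₂.homEquiv (𝟙 B) with hu₂
  have he₁ : ∀ {N : T} (f : A ⟶ N), e₁.homEquiv f = u₁ ≫ G.map f := by
    intro N f; rw [e₁.homEquiv_eq f]; rfl
  have he₂ : ∀ {N : T} (f : B ⟶ N), e₂.homEquiv f = u₂ ≫ G.map f := by
    intro N f; rw [e₂.homEquiv_eq f]; rfl
  set φ : A ⟶ B := e₁.homEquiv.symm (Tri.mor₁ ≫ u₂) with hφdef
  have hsq : Tri.mor₁ ≫ u₂ = u₁ ≫ G.map φ := by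
    rw [← he₁ φ, hφdef, Equiv.apply_symm_apply]
  obtain ⟨Cc, a, b, hT⟩ := Pretriangulated.distinguished_cocone_triangle φ
  have hGT := G.map_distinguished _ hT
  obtain ⟨c, hc₁, hc₂⟩ : ∃ c : Tri.obj₃ ⟶ G.obj Cc, Tri.mor₂ ≫ c = u₂ ≫ G.map a ∧
      Tri.mor₃ ≫ u₁⟦(1:ℤ)⟧' = c ≫ (G.map b ≫ (G.commShiftIso (1:ℤ)).hom.app A) :=
    complete_distinguished_triangle_morphism Tri
    (G.mapTriangle.obj (Triangle.mk φ a b)) hTri hGT u₁ u₂ hsq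
  dsimp [Functor.mapTriangle] at hc₁ hc₂
  -- hc₁ : Tri.mor₂ ≫ c = u₂ ≫ G.map a
  -- hc₂ : Tri.mor₃ ≫ u₁⟦1⟧' = c ≫ (G.map b ≫ (G.commShiftIso 1).hom.app A)
  -- the two shifted comparison maps
  let ε₁ : ∀ (N : T), (A⟦(1:ℤ)⟧ ⟶ N) → (Tri.obj₁⟦(1:ℤ)⟧ ⟶ G.obj N) :=
    fun N h => u₁⟦(1:ℤ)⟧' ≫ (G.commShiftIso (1:ℤ)).inv.app A ≫ G.map h
  let ε₂ : ∀ (N : T), (B⟦(1:ℤ)⟧ ⟶ N) → (Tri.obj₂⟦(1:ℤ)⟧ ⟶ G.obj N) :=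
    fun N h => u₂⟦(1:ℤ)⟧' ≫ (G.commShiftIso (1:ℤ)).inv.app B ≫ G.map h
  have hbij₁ : ∀ (N : T), Function.Bijective (ε₁ N) := fun N => shift_bijective e₁ N
  have hbij₂ : ∀ (N : T), Function.Bijective (ε₂ N) := fun N => shift_bijective e₂ N
  have hcb : c ≫ G.map b = Tri.mor₃ ≫ u₁⟦(1:ℤ)⟧' ≫ (G.commShiftIso (1:ℤ)).inv.app A := by
    rw [← cancel_mono ((G.commShiftIso (1:ℤ)).hom.app A)]
    simpa only [assoc, Iso.inv_hom_id_app, Functor.comp_obj, comp_id] using hc₂.symm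
  -- square 2
  have hΦb : ∀ {N : T} (h : A⟦(1:ℤ)⟧ ⟶ N), c ≫ G.map (b ≫ h) = Tri.mor₃ ≫ ε₁ N h := by
    intro N h
    show _ = Tri.mor₃ ≫ u₁⟦(1:ℤ)⟧' ≫ (G.commShiftIso (1:ℤ)).inv.app A ≫ G.map h
    rw [G.map_comp, ← assoc, hcb]
    simp only [assoc]
  -- square 1 (shifted)
  have hsq1 : ∀ {N : T} (w : B⟦(1:ℤ)⟧ ⟶ N),
      ε₁ N (φ⟦(1:ℤ)⟧' ≫ w) = Tri.mor₁⟦(1:ℤ)⟧' ≫ ε₂ N w := by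
    intro N w
    have hnat := (G.commShiftIso (1:ℤ)).inv.naturality φ
    dsimp at hnat
    show u₁⟦(1:ℤ)⟧' ≫ (G.commShiftIso (1:ℤ)).inv.app A ≫ G.map (φ⟦(1:ℤ)⟧' ≫ w) =
      Tri.mor₁⟦(1:ℤ)⟧' ≫ u₂⟦(1:ℤ)⟧' ≫ (G.commShiftIso (1:ℤ)).inv.app B ≫ G.map w
    rw [G.map_comp, ← reassoc_of% hnat]
    simp only [← assoc]
    congr 2
    rw [← Functor.map_comp, ← Functor.map_comp, ← hsq]
  -- the candidate bijection
  have hbij : ∀ (N : T), Function.Bijective (fun (f : Cc ⟶ N) => c ≫ G.map f) := by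
    intro N
    constructor
    · -- injective via trivial kernel
      have hker : ∀ (f : Cc ⟶ N), c ≫ G.map f = 0 → f = 0 := by
        intro f hf
        have h2 : e₂.homEquiv (a ≫ f) = (0 : Tri.obj₂ ⟶ G.obj N) := by
          rw [he₂, G.map_comp, ← assoc, ← hc₁, assoc, hf, comp_zero]
        have h3 : a ≫ f = 0 := by
          apply e₂.homEquiv.injective
          rw [h2, he₂, Functor.map_zero, comp_zero]
        obtain ⟨h, hh⟩ : ∃ (h : A⟦(1:ℤ)⟧ ⟶ N), f = b ≫ h := by
          exact Triangle.yoneda_exact₃ _ hT f h3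
        have h4 : Tri.mor₃ ≫ ε₁ N h = 0 := by rw [← hΦb h, ← hh, hf]
        obtain ⟨w, hw⟩ := Triangle.yoneda_exact₃ _ (rot_of_distTriang _ hTri) (ε₁ N h) h4
        dsimp [Triangle.rotate] at hw
        obtain ⟨w', hw'⟩ := (hbij₂ N).surjective w
        have h6 : h = -(φ⟦(1:ℤ)⟧' ≫ w') := by
          apply (hbij₁ N).injective
          show ε₁ N h = ε₁ N (-(φ⟦(1:ℤ)⟧' ≫ w'))
          have hneg : ε₁ N (-(φ⟦(1:ℤ)⟧' ≫ w')) = -(ε₁ N (φ⟦(1:ℤ)⟧' ≫ w')) := by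
            show u₁⟦(1:ℤ)⟧' ≫ (G.commShiftIso (1:ℤ)).inv.app A ≫ G.map (-(φ⟦(1:ℤ)⟧' ≫ w')) = _
            rw [Functor.map_neg, Preadditive.comp_neg, Preadditive.comp_neg]
          rw [hneg, hsq1, hw, ← hw']
          exact Preadditive.neg_comp _ _
        have hbφ : b ≫ φ⟦(1:ℤ)⟧' = 0 := by
          exact comp_distTriang_mor_zero₃₁ _ hT
        rw [hh, h6, Preadditive.comp_neg, ← assoc, hbφ, zero_comp, neg_zero]
      intro f f' hff'
      have hff'' : c ≫ G.map f = c ≫ G.map f' := hff'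
      have : c ≫ G.map (f - f') = 0 := by
        rw [Functor.map_sub, Preadditive.comp_sub, hff'', sub_self]
      have := hker _ this
      rwa [sub_eq_zero] at this
    · -- surjective
      intro t
      set g : B ⟶ N := e₂.homEquiv.symm (Tri.mor₂ ≫ t) with hgdef
      have hg : e₂.homEquiv g = Tri.mor₂ ≫ t := by rw [hgdef, Equiv.apply_symm_apply]
      have hφg : φ ≫ g = 0 := by
        apply e₁.homEquiv.injective
        rw [he₁, G.map_comp, ← assoc, ← hsq, assoc, ← he₂, hg, ← assoc,
          comp_distTriang_mor_zero₁₂ _ hTri, zero_comp, he₁, Functor.map_zero, comp_zero]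
      obtain ⟨f, hfg⟩ : ∃ (f : Cc ⟶ N), g = a ≫ f := by
        exact Triangle.yoneda_exact₂ _ hT g hφg
      have h7 : Tri.mor₂ ≫ (t - c ≫ G.map f) = 0 := by
        rw [Preadditive.comp_sub, ← hg, hfg, he₂, G.map_comp, ← assoc, ← hc₁, assoc, sub_self]
      obtain ⟨k, hk⟩ := Triangle.yoneda_exact₃ _ hTri _ h7
      obtain ⟨h, hh⟩ := (hbij₁ N).surjective k
      refine ⟨f + b ≫ h, ?_⟩
      show c ≫ G.map (f + b ≫ h) = t
      rw [Functor.map_add, Preadditive.comp_add, hΦb h, hh, ← hk]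
      abel
  exact ⟨⟨Cc, ⟨{
    homEquiv := fun {N} => Equiv.ofBijective _ (hbij N)
    homEquiv_comp := fun {N N'} g f => by
      dsimp [Equiv.ofBijective]
      rw [G.map_comp, assoc] }⟩⟩⟩

end Cone

end CorepClosedAux

theorem corepresentable_closed_under_cones_and_coproducts
    {T : Type u} {T' : Type u'} [Category.{v} T] [Category.{v} T']
    [HasZeroObject T] [HasZeroObject T'] [Preadditive T] [Preadditive T']
    [HasShift T ℤ] [HasShift T' ℤ]
    [∀ n : ℤ, (CategoryTheory.shiftFunctor T n).Additive]
    [∀ n : ℤ, (CategoryTheory.shiftFunctor T' n).Additive]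
    [Pretriangulated T] [Pretriangulated T'] [IsTriangulated T] [IsTriangulated T']
    (G : T ⥤ T') [G.CommShift ℤ] [G.IsTriangulated] :
    -- (1) closure under cones
    (∀ (Tri : Triangle T'), (Tri ∈ distTriang T') →
      (G ⋙ coyoneda.obj (Opposite.op Tri.obj₁)).IsCorepresentable →
      (G ⋙ coyoneda.obj (Opposite.op Tri.obj₂)).IsCorepresentable →
      (G ⋙ coyoneda.obj (Opposite.op Tri.obj₃)).IsCorepresentable) ∧
    -- (2) closure under small direct sums
    (∀ [HasCoproducts.{v} T] [HasCoproducts.{v} T'] (ι : Type v) (M : ι → T'),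
      (∀ i, (G ⋙ coyoneda.obj (Opposite.op (M i))).IsCorepresentable) →
      (G ⋙ coyoneda.obj (Opposite.op (∐ M))).IsCorepresentable) := by
  constructor
  · exact fun Tri hTri h₁ h₂ => CorepClosedAux.cone_corep G Tri hTri h₁ h₂
  · intro _ _ ι M h
    exact Functor.leftAdjointObjIsDefined_colimit (F := G) (Discrete.functor M)
      (fun j => h j.as)
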